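/- Let σ > 0, t > 0, μ ∈ ℝ, and K, K' > 0. Then ∫_ℝ max(e^{2 log K − y} − K', 0) · (2πσ²t)^{−1/2} exp(−(y − (log K + μt))²/(2σ²t)) dy = K e^{(σ²/2 − μ)t} 𝒩((log(K/K') − (μ − σ²)t)/(σ√t)) − K' 𝒩((log(K/K') − μt)/(σ√t)). -/

import Mathlib

open MeasureTheory

/-- The standard normal cumulative distribution function. -/
noncomputable def stdNormalCdf (x : ℝ) : ℝ :=
  ∫ u in Set.Iio x, (Real.sqrt (2 * Real.pi))⁻¹ * Real.exp (-u ^ 2 / 2)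

lemma gauss_cdf (a s b : ℝ) (hs : 0 < s) :
    ∫ y in Set.Iio b, (Real.sqrt (2*Real.pi))⁻¹ * s⁻¹ * Real.exp (-(y-a)^2/(2*s^2))
      = stdNormalCdf ((b-a)/s) := by
  have himg : Set.Iio b = (fun u => a + s*u) '' Set.Iio ((b-a)/s) := by
    ext y; simp only [Set.mem_image, Set.mem_Iio]
    constructor
    · intro hy
      refine ⟨(y-a)/s, by gcongr, by field_simp; ring⟩
    · rintro ⟨u, hu, rfl⟩
      have h2 := (mul_lt_mul_iff_right₀ hs).2 hu
      rw [mul_div_cancel₀ _ hs.ne'] at h2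
      linarith
  rw [stdNormalCdf, himg,
    integral_image_eq_integral_abs_deriv_smul measurableSet_Iio
      (f' := fun _ => s) (fun x _ => (by simpa using ((hasDerivAt_id x).const_mul s |>.const_add a).hasDerivWithinAt (s := Set.Iio ((b-a)/s))))
      (fun x _ y _ h => by simpa [hs.ne'] using h)]
  congr 1; ext u
  have h3 : -(a + s*u - a)^2/(2*s^2) = -u^2/2 := by field_simp; ring
  rw [smul_eq_mul, h3, abs_of_pos hs]
  field_simp

/-- For `σ, t, K, K' > 0` and `μ ∈ ℝ`,
`∫ max(e^{2 log K − y} − K',0) (2πσ²t)^{−1/2} exp(−(y − (log K + μt))²/(2σ²t)) dy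
  = K e^{(σ²/2−μ)t} 𝒩((log(K/K') − (μ−σ²)t)/(σ√t)) − K' 𝒩((log(K/K') − μt)/(σ√t))`. -/
theorem stmt_14 (σ t μ K K' : ℝ) (hσ : 0 < σ) (ht : 0 < t) (hK : 0 < K) (hK' : 0 < K') :
    (∫ y : ℝ, max (Real.exp (2 * Real.log K - y) - K') 0
        * ((Real.sqrt (2 * Real.pi * σ ^ 2 * t))⁻¹
          * Real.exp (-(y - (Real.log K + μ * t)) ^ 2 / (2 * σ ^ 2 * t))))
      = K * Real.exp ((σ ^ 2 / 2 - μ) * t)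
          * stdNormalCdf ((Real.log (K / K') - (μ - σ ^ 2) * t) / (σ * Real.sqrt t))
        - K' * stdNormalCdf ((Real.log (K / K') - μ * t) / (σ * Real.sqrt t)) := by
  set s := σ * Real.sqrt t with hsdef
  have hs : 0 < s := mul_pos hσ (Real.sqrt_pos.2 ht)
  have hs2 : s ^ 2 = σ ^ 2 * t := by rw [hsdef, mul_pow, Real.sq_sqrt ht.le]
  set a := Real.log K + μ * t with ha
  set b := 2 * Real.log K - Real.log K' with hb
  set C := Real.exp (2 * Real.log K - a + s ^ 2 / 2) with hC
  set g := (Real.sqrt (2 * Real.pi))⁻¹ * s⁻¹ with hg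
  have hsqrt : (Real.sqrt (2 * Real.pi * σ ^ 2 * t))⁻¹ = g := by
    rw [hg, ← mul_inv]
    congr 1
    rw [hsdef, show 2 * Real.pi * σ ^ 2 * t = (2 * Real.pi) * (σ * Real.sqrt t) ^ 2 from by
      rw [mul_pow, Real.sq_sqrt ht.le]; ring,
      Real.sqrt_mul (by positivity), Real.sqrt_sq (by positivity)]
  have hexp : ∀ y : ℝ, -(y - a) ^ 2 / (2 * σ ^ 2 * t) = -(y - a) ^ 2 / (2 * s ^ 2) := by
    intro y; rw [hs2]; ring_nf
  -- pointwise identity turning max into indicator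
  have hind : (fun y : ℝ => max (Real.exp (2 * Real.log K - y) - K') 0
        * (g * Real.exp (-(y - a) ^ 2 / (2 * s ^ 2))))
      = Set.indicator (Set.Iio b) (fun y => (Real.exp (2 * Real.log K - y) - K')
        * (g * Real.exp (-(y - a) ^ 2 / (2 * s ^ 2)))) := by
    funext y
    by_cases hy : y < b
    · rw [Set.indicator_of_mem (Set.mem_Iio.mpr hy)]
      have h1 : K' < Real.exp (2 * Real.log K - y) := by
        rw [← Real.exp_log hK']
        exact Real.exp_lt_exp.2 (by rw [hb] at hy; linarith)
      rw [max_eq_left (by linarith)]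
    · rw [Set.indicator_of_notMem (by simpa using hy)]
      have h1 : Real.exp (2 * Real.log K - y) ≤ K' := by
        rw [← Real.exp_log hK']
        exact Real.exp_le_exp.2 (by rw [hb] at hy; linarith [not_lt.mp hy])
      rw [max_eq_right (by linarith), zero_mul]
  -- completing the square
  have hsq : ∀ y : ℝ, Real.exp (2 * Real.log K - y) * Real.exp (-(y - a) ^ 2 / (2 * s ^ 2))
      = C * Real.exp (-(y - (a - s ^ 2)) ^ 2 / (2 * s ^ 2)) := by
    intro y
    rw [hC, ← Real.exp_add, ← Real.exp_add]
    congr 1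
    field_simp
    ring
  have hpt : ∀ y : ℝ, (Real.exp (2 * Real.log K - y) - K')
        * (g * Real.exp (-(y - a) ^ 2 / (2 * s ^ 2)))
      = C * (g * Real.exp (-(y - (a - s ^ 2)) ^ 2 / (2 * s ^ 2)))
        - K' * (g * Real.exp (-(y - a) ^ 2 / (2 * s ^ 2))) := by
    intro y
    linear_combination g * hsq y
  have gint : ∀ m : ℝ, Integrable (fun y : ℝ => g * Real.exp (-(y - m) ^ 2 / (2 * s ^ 2))) := by
    intro m
    have h0 : (0 : ℝ) < (2 * s ^ 2)⁻¹ := by positivity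
    have h1 := (integrable_exp_neg_mul_sq h0).comp_sub_right m
    have h2 : (fun y : ℝ => g * Real.exp (-(y - m) ^ 2 / (2 * s ^ 2)))
        = fun y : ℝ => g * Real.exp (-(2 * s ^ 2)⁻¹ * (y - m) ^ 2) := by
      funext y; congr 1; ring
    rw [h2]
    exact h1.const_mul g
  simp only [hsqrt, hexp]
  rw [hind, integral_indicator measurableSet_Iio]
  rw [setIntegral_congr_fun measurableSet_Iio (fun y _ => hpt y)]
  rw [integral_sub (((gint (a - s^2)).const_mul C).integrableOn)
    (((gint a).const_mul K').integrableOn)]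
  have key : ∀ m : ℝ, g * ∫ y in Set.Iio b, Real.exp (-(y - m) ^ 2 / (2 * s ^ 2))
      = stdNormalCdf ((b - m) / s) := by
    intro m
    rw [← MeasureTheory.integral_const_mul]
    simp only [hg]
    exact gauss_cdf m s b hs
  simp only [integral_const_mul]
  rw [key (a - s ^ 2), key a]
  have hCval : C = K * Real.exp ((σ ^ 2 / 2 - μ) * t) := by
    rw [hC, hs2, ha, show 2 * Real.log K - (Real.log K + μ * t) + σ ^ 2 * t / 2
      = Real.log K + (σ ^ 2 / 2 - μ) * t from by ring, Real.exp_add, Real.exp_log hK]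
  have harg1 : (b - (a - s ^ 2)) / s
      = (Real.log (K / K') - (μ - σ ^ 2) * t) / (σ * Real.sqrt t) := by
    rw [← hsdef, Real.log_div hK.ne' hK'.ne', hb, ha, hs2]
    congr 1
    ring
  have harg2 : (b - a) / s = (Real.log (K / K') - μ * t) / (σ * Real.sqrt t) := by
    rw [← hsdef, Real.log_div hK.ne' hK'.ne', hb, ha]
    congr 1
    ring
  rw [hCval, harg1, harg2]
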